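/- Let n = 2k with k ≥ 1. There exists a (necessarily unique) polynomial P in the entries c_{ij} (1 ≤ i ≤ j ≤ n) and a_{ij} (1 ≤ i, j ≤ n), with real coefficients, such that for every invertible symmetric n×n real matrix c and every n×n real matrix a, P evaluated at (c,a) equals det(c)³ · det( ½ ( a c⁻¹ − (a c⁻¹)ᵀ ) ). Equivalently, in the polynomial ring in these variables (with c regarded as a symmetric matrix of indeterminates), det(c)^{2k−3} divides det( ½ ( a · adj(c) − adj(c) · aᵀ ) ) when k ≥ 2. -/

import Mathlib

open Matrix

/-- Variable index type: one variable c_{ij} for each pair i ≤ j (entries of a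
    symmetric matrix) and one variable a_{ij} for each pair (i,j). -/
abbrev OrbitVar (n : ℕ) := {p : Fin n × Fin n // p.1 ≤ p.2} ⊕ (Fin n × Fin n)

/-- Evaluation of the variables at a concrete pair of matrices (c, a). -/
def orbitEval {n : ℕ} (c a : Matrix (Fin n) (Fin n) ℝ) : OrbitVar n → ℝ :=
  Sum.elim (fun p => c p.1.1 p.1.2) (fun p => a p.1 p.2)

noncomputable def Cmat (n : ℕ) : Matrix (Fin n) (Fin n) (MvPolynomial (OrbitVar n) ℝ) :=
  fun i j => if h : i ≤ j then MvPolynomial.X (Sum.inl ⟨(i, j), h⟩)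
    else MvPolynomial.X (Sum.inl ⟨(j, i), (le_total i j).resolve_left h⟩)

noncomputable def Amat (n : ℕ) : Matrix (Fin n) (Fin n) (MvPolynomial (OrbitVar n) ℝ) :=
  fun i j => MvPolynomial.X (Sum.inr (i, j))

noncomputable def Pbig (n : ℕ) : MvPolynomial (OrbitVar n) ℝ :=
  (Cmat n).det * ((1 / 2 : ℝ) • (Cmat n * Amat n - (Amat n)ᵀ * Cmat n)).det

lemma Cmat_map {n : ℕ} (c a : Matrix (Fin n) (Fin n) ℝ) (hc : c.IsSymm) :
    (Cmat n).map (MvPolynomial.eval (orbitEval c a)) = c := by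
  ext i j
  simp only [Cmat, Matrix.map_apply]
  split_ifs with h
  · simp [orbitEval]
  · simp only [MvPolynomial.eval_X, orbitEval, Sum.elim_inl]
    exact hc.apply i j

lemma Amat_map {n : ℕ} (c a : Matrix (Fin n) (Fin n) ℝ) :
    (Amat n).map (MvPolynomial.eval (orbitEval c a)) = a := by
  ext i j
  simp [Amat, orbitEval]

lemma smul_map {n : ℕ} (v : OrbitVar n → ℝ) (r : ℝ)
    (M : Matrix (Fin n) (Fin n) (MvPolynomial (OrbitVar n) ℝ)) :
    (r • M).map (MvPolynomial.eval v) = r • M.map (MvPolynomial.eval v) := by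
  ext i j
  simp [Matrix.map_apply, MvPolynomial.smul_eval]

lemma Pbig_eval {n : ℕ} (c a : Matrix (Fin n) (Fin n) ℝ) (hc : c.IsSymm) :
    MvPolynomial.eval (orbitEval c a) (Pbig n) =
      c.det * ((1 / 2 : ℝ) • (c * a - aᵀ * c)).det := by
  unfold Pbig
  rw [_root_.map_mul, RingHom.map_det, RingHom.map_det, RingHom.mapMatrix_apply, RingHom.mapMatrix_apply, Cmat_map c a hc, smul_map,
    Matrix.map_sub, Matrix.map_mul, Matrix.map_mul, Matrix.transpose_map,
    Cmat_map c a hc, Amat_map c a]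
  exact fun p q => map_sub _ p q

lemma key_identity {n : ℕ} (c a : Matrix (Fin n) (Fin n) ℝ) (hc : c.IsSymm)
    (hu : IsUnit c.det) :
    c.det ^ 3 * ((1 / 2 : ℝ) • (a * c⁻¹ - (a * c⁻¹)ᵀ)).det =
      c.det * ((1 / 2 : ℝ) • (c * a - aᵀ * c)).det := by
  have hinv : c⁻¹ᵀ = c⁻¹ := by rw [Matrix.transpose_nonsing_inv, hc.eq]
  have hcc : c * c⁻¹ = 1 := Matrix.mul_nonsing_inv c hu
  have hcc' : c⁻¹ * c = 1 := Matrix.nonsing_inv_mul c hu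
  have h1 : c * ((1 / 2 : ℝ) • (a * c⁻¹ - (a * c⁻¹)ᵀ)) * c =
      (1 / 2 : ℝ) • (c * a - aᵀ * c) := by
    rw [Matrix.mul_smul, Matrix.smul_mul]
    congr 1
    have step : c * (a * c⁻¹ - (a * c⁻¹)ᵀ) * c =
        c * a * (c⁻¹ * c) - (c * c⁻¹) * (aᵀ * c) := by
      rw [Matrix.transpose_mul, hinv]
      noncomm_ring
    rw [step, hcc, hcc', mul_one, one_mul]
  have h2 := congrArg Matrix.det h1
  rw [Matrix.det_mul, Matrix.det_mul] at h2
  rw [← h2]; ring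

theorem h_k_is_polynomial (k : ℕ) (hk : 1 ≤ k) :
    ∃! P : MvPolynomial (OrbitVar (2 * k)) ℝ,
      ∀ c a : Matrix (Fin (2 * k)) (Fin (2 * k)) ℝ, c.IsSymm → IsUnit c.det →
        MvPolynomial.eval (orbitEval c a) P =
          c.det ^ 3 * ((1 / 2 : ℝ) • (a * c⁻¹ - (a * c⁻¹)ᵀ)).det := by
  set n := 2 * k
  have hP : ∀ c a : Matrix (Fin n) (Fin n) ℝ, c.IsSymm → IsUnit c.det →
      MvPolynomial.eval (orbitEval c a) (Pbig n) =
        c.det ^ 3 * ((1 / 2 : ℝ) • (a * c⁻¹ - (a * c⁻¹)ᵀ)).det := by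
    intro c a hc hu
    rw [Pbig_eval c a hc, ← key_identity c a hc hu]
  refine ⟨Pbig n, hP, ?_⟩
  intro Q hQ
  have hCdet_ne : (Cmat n).det ≠ 0 := by
    intro h0
    have := congrArg (MvPolynomial.eval (orbitEval (1 : Matrix (Fin n) (Fin n) ℝ) 0)) h0
    rw [map_zero, RingHom.map_det, RingHom.mapMatrix_apply, Cmat_map 1 0 Matrix.isSymm_one, Matrix.det_one] at this
    exact one_ne_zero this
  have hmul : Q * (Cmat n).det = Pbig n * (Cmat n).det := by
    apply MvPolynomial.funext
    intro v
    set c : Matrix (Fin n) (Fin n) ℝ := fun i j =>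
      if h : i ≤ j then v (Sum.inl ⟨(i, j), h⟩) else v (Sum.inl ⟨(j, i), (le_total i j).resolve_left h⟩)
      with hcdef
    set a : Matrix (Fin n) (Fin n) ℝ := fun i j => v (Sum.inr (i, j)) with hadef
    have hcs : c.IsSymm := by
      ext i j
      rw [Matrix.transpose_apply]; simp only [hcdef]
      rcases le_total i j with h | h
      · rcases eq_or_lt_of_le h with rfl | hlt
        · rfl
        · rw [dif_neg (not_le.mpr hlt), dif_pos h]
      · rcases eq_or_lt_of_le h with rfl | hlt
        · rfl
        · rw [dif_pos h, dif_neg (not_le.mpr hlt)]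
    have hv : orbitEval c a = v := by
      funext x
      cases x with
      | inl p =>
        simp only [orbitEval, Sum.elim_inl, hcdef, dif_pos p.2]
      | inr p =>
        simp [orbitEval, hadef]
    have hCdet : MvPolynomial.eval v (Cmat n).det = c.det := by
      rw [RingHom.map_det, RingHom.mapMatrix_apply, ← hv, Cmat_map c a hcs]
    by_cases hu : IsUnit c.det
    · rw [_root_.map_mul, _root_.map_mul, hCdet]
      have e1 := hQ c a hcs hu
      have e2 := hP c a hcs hu
      rw [hv] at e1 e2
      rw [e1, e2]
    · have : c.det = 0 := by
        by_contra h
        exact hu (isUnit_iff_ne_zero.mpr h)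
      rw [_root_.map_mul, _root_.map_mul, hCdet, this, mul_zero, mul_zero]
  exact mul_right_cancel₀ hCdet_ne hmul
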